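/- Let G be a linearly ordered abelian group, H ⊆ H' convex subgroups of G, and n, m positive integers with n | m. Then nH + mH' = nH' ∩ (H + mH'). -/

import Mathlib

/-- `kK = {k • x : x ∈ K}` as a subgroup. -/
def smulSub {G : Type*} [AddCommGroup G] (k : ℕ) (K : AddSubgroup G) : AddSubgroup G :=
  AddSubgroup.map (k • AddMonoidHom.id G) K

/-- A subgroup `H` of a linearly ordered abelian group is convex if
`0 ≤ g ≤ h` and `h ∈ H` imply `g ∈ H`. -/
def IsConvexSubgroup {G : Type*} [AddCommGroup G] [LinearOrder G] [IsOrderedAddMonoid G] (H : AddSubgroup G) : Prop :=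
  ∀ g h : G, 0 ≤ g → g ≤ h → h ∈ H → g ∈ H

lemma mem_smulSub {G : Type*} [AddCommGroup G] {k : ℕ} {K : AddSubgroup G} {x : G} :
    x ∈ smulSub k K ↔ ∃ y ∈ K, k • y = x := by
  simp [smulSub, AddSubgroup.mem_map]

lemma mem_of_nsmul_mem {G : Type*} [AddCommGroup G] [LinearOrder G] [IsOrderedAddMonoid G] {H : AddSubgroup G}
    (hH : IsConvexSubgroup H) {n : ℕ} (hn : 1 ≤ n) {u : G} (h : n • u ∈ H) : u ∈ H := by
  rcases le_total 0 u with hu | hu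
  · refine hH u (n • u) hu ?_ h
    calc u = 1 • u := (one_nsmul u).symm
      _ ≤ n • u := nsmul_le_nsmul_left hu hn
  · have h2 : -u ∈ H := by
      refine hH (-u) (n • (-u)) (neg_nonneg.mpr hu) ?_ (by simpa using H.neg_mem h)
      calc -u = 1 • (-u) := (one_nsmul _).symm
        _ ≤ n • (-u) := nsmul_le_nsmul_left (neg_nonneg.mpr hu) hn
    simpa using H.neg_mem h2

/-- For convex subgroups `H ⊆ H'` of a linearly ordered abelian group and positive
integers `n ∣ m`, `nH + mH' = nH' ∩ (H + mH')`. -/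
theorem smul_sup_smul_eq_inf {G : Type*} [AddCommGroup G] [LinearOrder G] [IsOrderedAddMonoid G]
    (H H' : AddSubgroup G) (hH : IsConvexSubgroup H) (hH' : IsConvexSubgroup H')
    (hle : H ≤ H') (n m : ℕ) (hn : 1 ≤ n) (hm : 1 ≤ m) (hdvd : n ∣ m) :
    smulSub n H ⊔ smulSub m H' = smulSub n H' ⊓ (H ⊔ smulSub m H') := by
  obtain ⟨k, rfl⟩ := hdvd
  apply le_antisymm
  · refine sup_le (le_inf ?_ ?_) (le_inf ?_ le_sup_right)
    · intro x hx
      rcases mem_smulSub.mp hx with ⟨y, hy, rfl⟩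
      exact mem_smulSub.mpr ⟨y, hle hy, rfl⟩
    · intro x hx
      rcases mem_smulSub.mp hx with ⟨y, hy, rfl⟩
      exact AddSubgroup.mem_sup_left (H.nsmul_mem hy n)
    · intro x hx
      rcases mem_smulSub.mp hx with ⟨y, hy, rfl⟩
      exact mem_smulSub.mpr ⟨k • y, H'.nsmul_mem hy k, by rw [smul_smul]⟩
  · intro x hx
    rcases hx with ⟨hx1, hx2⟩
    rcases mem_smulSub.mp hx1 with ⟨h', hh', rfl⟩
    rcases AddSubgroup.mem_sup.mp hx2 with ⟨a, ha, b, hb, hab⟩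
    rcases mem_smulSub.mp hb with ⟨b', hb', rfl⟩
    have key : n • (h' - k • b') = a := by
      rw [smul_sub, smul_smul, ← hab]; abel
    have hmem : h' - k • b' ∈ H := mem_of_nsmul_mem hH hn (key ▸ ha)
    refine AddSubgroup.mem_sup.mpr ⟨n • (h' - k • b'), mem_smulSub.mpr ⟨_, hmem, rfl⟩,
      (n * k) • b', mem_smulSub.mpr ⟨b', hb', rfl⟩, ?_⟩
    rw [smul_sub, smul_smul]; abel
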